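/- Let 0 < x₁ < x₂ ≤ ∞ and μ ∈ ℝ. Then lim_{t→∞} (x₁+1)^{t−1} · t · ∫_{x₁}^{x₂} x^{μ−1}(1+x)^{−t} dx = x₁^{μ−1}. (In particular the limit is independent of x₂.) -/

import Mathlib

open MeasureTheory Filter

namespace Stmt1Aux

open Set Real

lemma tendsto_ratio (b : ℝ) : Tendsto (fun t : ℝ => t / (t - b)) atTop (nhds 1) := by
  have h : Tendsto (fun t : ℝ => 1 - b / t) atTop (nhds 1) := by
    have h0 : Tendsto (fun t : ℝ => b / t) atTop (nhds 0) :=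
      Tendsto.div_atTop tendsto_const_nhds tendsto_id
    simpa using tendsto_const_nhds.sub h0
  have h2 := h.inv₀ one_ne_zero
  rw [inv_one] at h2
  apply h2.congr'
  filter_upwards [eventually_gt_atTop 0] with t ht
  rw [show (1 : ℝ) - b / t = (t - b) / t by field_simp, inv_div]

lemma tendsto_rpow_ratio {c d : ℝ} (hc : 0 < c) (hcd : c < d) :
    Tendsto (fun t : ℝ => (c / d) ^ t) atTop (nhds 0) := by
  have hd : 0 < d := hc.trans hcd
  have h0 : 0 < c / d := div_pos hc hd
  exact tendsto_rpow_atTop_of_base_lt_one _ (by linarith) ((div_lt_one hd).2 hcd)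

lemma tendsto_Phi {c d : ℝ} (hc : 0 < c) (hcd : c < d) :
    Tendsto (fun t : ℝ => c ^ (t - 1) * t * ((c ^ (1 - t) - d ^ (1 - t)) / (t - 1)))
      atTop (nhds 1) := by
  have hd : 0 < d := hc.trans hcd
  have hr : Tendsto (fun t : ℝ => (c / d) ^ (t - 1)) atTop (nhds 0) := by
    have := (tendsto_rpow_ratio hc hcd).comp (tendsto_atTop_add_const_right atTop (-1) tendsto_id)
    simpa [Function.comp_def, sub_eq_add_neg] using this
  have hmain : Tendsto (fun t : ℝ => t / (t - 1) * (1 - (c / d) ^ (t - 1))) atTop (nhds 1) := by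
    have := (tendsto_ratio 1).mul ((tendsto_const_nhds (x := (1:ℝ))).sub hr)
    simpa using this
  apply hmain.congr'
  filter_upwards [eventually_gt_atTop 1] with t ht
  have hX : (0 : ℝ) < c ^ (t - 1) := Real.rpow_pos_of_pos hc _
  have hY : (0 : ℝ) < d ^ (t - 1) := Real.rpow_pos_of_pos hd _
  have ht1 : t - 1 ≠ 0 := by linarith
  have h1 : c ^ (1 - t) = (c ^ (t - 1))⁻¹ := by
    rw [show (1 - t) = -(t - 1) by ring, Real.rpow_neg hc.le]
  have h2 : d ^ (1 - t) = (d ^ (t - 1))⁻¹ := by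
    rw [show (1 - t) = -(t - 1) by ring, Real.rpow_neg hd.le]
  have h3 : (c / d) ^ (t - 1) = c ^ (t - 1) / d ^ (t - 1) := Real.div_rpow hc.le hd.le _
  rw [h1, h2, h3]
  field_simp

lemma tendsto_Psi {c d : ℝ} (hc : 0 < c) (hcd : c < d) (E K : ℝ) :
    Tendsto (fun t : ℝ => c ^ (t - 1) * t * (K * (d ^ (E + 1 - t) / (t - (E + 1)))))
      atTop (nhds 0) := by
  have hd : 0 < d := hc.trans hcd
  have hmain : Tendsto
      (fun t : ℝ => K * d ^ (E + 1) / c * ((c / d) ^ t * (t / (t - (E + 1)))))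
      atTop (nhds 0) := by
    have := ((tendsto_rpow_ratio hc hcd).mul (tendsto_ratio (E + 1))).const_mul
      (K * d ^ (E + 1) / c)
    simpa using this
  apply hmain.congr'
  filter_upwards [eventually_gt_atTop (max 0 (E + 1))] with t ht
  have ht0 : (0 : ℝ) < t := lt_of_le_of_lt (le_max_left _ _) ht
  have htE : E + 1 < t := lt_of_le_of_lt (le_max_right _ _) ht
  have h1 : c ^ (t - 1) = c ^ t / c := by rw [Real.rpow_sub hc, Real.rpow_one]
  have h2 : d ^ (E + 1 - t) = d ^ (E + 1) / d ^ t := Real.rpow_sub hd _ _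
  have h3 : (c / d) ^ t = c ^ t / d ^ t := Real.div_rpow hc.le hd.le _
  have hct : (0 : ℝ) < c ^ t := Real.rpow_pos_of_pos hc _
  have hdt : (0 : ℝ) < d ^ t := Real.rpow_pos_of_pos hd _
  have htE' : t - (E + 1) ≠ 0 := by linarith
  rw [h1, h2, h3]
  field_simp

lemma integral_Ioc_one_add_rpow {a b t : ℝ} (ha : 0 < a) (hab : a ≤ b) (ht : 1 < t) :
    ∫ x in Set.Ioc a b, (1 + x) ^ (-t) =
      ((1 + a) ^ (1 - t) - (1 + b) ^ (1 - t)) / (t - 1) := by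
  rw [← intervalIntegral.integral_of_le hab]
  have h := intervalIntegral.integral_comp_add_left (a := a) (b := b) (fun y => y ^ (-t)) 1
  rw [h, integral_rpow (Or.inr ⟨by linarith, Set.notMem_uIcc_of_lt (by linarith) (by linarith)⟩)]
  have h1 : t - 1 ≠ 0 := by linarith
  have h2 : -t + 1 = 1 - t := by ring
  rw [h2, show (1 : ℝ) - t = -(t - 1) by ring, div_neg]
  ring

lemma integral_Ioi_one_add_rpow {b s : ℝ} (hb : 0 < b) (hs : s < -1) :
    ∫ x in Set.Ioi b, (1 + x) ^ s = (1 + b) ^ (s + 1) / (-(s + 1)) := by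
  have h1b : (0 : ℝ) < 1 + b := by linarith
  have key : ∫ x in Set.Ioi b, (1 + x) ^ s = ∫ y in Set.Ioi (1 + b), y ^ s := by
    have hmp := measurePreserving_add_left (volume : Measure ℝ) 1
    have hemb := measurableEmbedding_addLeft (1 : ℝ)
    have := hmp.setIntegral_preimage_emb hemb (fun y => y ^ s) (Set.Ioi (1 + b))
    rw [← this]
    have hpre : (fun x : ℝ => 1 + x) ⁻¹' Set.Ioi (1 + b) = Set.Ioi b := by
      ext x; simp
    simp only [hpre]
  rw [key, integral_Ioi_rpow_of_lt hs h1b, neg_div, div_neg]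

lemma key_bound {μ a : ℝ} (ha : 0 < a) {x : ℝ} (hx : a < x) :
    x ^ (μ - 1) ≤ max (a ^ (μ - 1)) 1 * (1 + x) ^ max (μ - 1) 0 := by
  have hx0 : 0 < x := ha.trans hx
  have h1x : (0 : ℝ) < 1 + x := by linarith
  rcases le_total (μ - 1) 0 with h | h
  · rw [max_eq_right h, Real.rpow_zero, mul_one]
    calc x ^ (μ - 1) ≤ a ^ (μ - 1) := Real.rpow_le_rpow_of_nonpos ha hx.le h
      _ ≤ max (a ^ (μ - 1)) 1 := le_max_left _ _
  · rw [max_eq_left h]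
    calc x ^ (μ - 1) ≤ (1 + x) ^ (μ - 1) := Real.rpow_le_rpow hx0.le (by linarith) h
      _ ≤ max (a ^ (μ - 1)) 1 * (1 + x) ^ (μ - 1) :=
        le_mul_of_one_le_left (Real.rpow_nonneg h1x.le _) (le_max_right _ _)

lemma ptwise_tail {μ a t : ℝ} (ha : 0 < a) {x : ℝ} (hx : a < x) :
    x ^ (μ - 1) * (1 + x) ^ (-t) ≤
      max (a ^ (μ - 1)) 1 * (1 + x) ^ (max (μ - 1) 0 - t) := by
  have hx0 : 0 < x := ha.trans hx
  have h1x : (0 : ℝ) < 1 + x := by linarith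
  calc x ^ (μ - 1) * (1 + x) ^ (-t)
      ≤ max (a ^ (μ - 1)) 1 * (1 + x) ^ max (μ - 1) 0 * (1 + x) ^ (-t) :=
        mul_le_mul_of_nonneg_right (key_bound ha hx) (Real.rpow_nonneg h1x.le _)
    _ = max (a ^ (μ - 1)) 1 * (1 + x) ^ (max (μ - 1) 0 - t) := by
        rw [mul_assoc, ← Real.rpow_add h1x, show max (μ - 1) 0 + -t = max (μ - 1) 0 - t by ring]

lemma integrableOn_one_add_rpow {b s : ℝ} (hb : 0 < b) (hs : s < -1) :
    IntegrableOn (fun x => (1 + x) ^ s) (Set.Ioi b) := by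
  refine Integrable.mono' (integrableOn_Ioi_rpow_of_lt hs hb)
    (((measurable_const.add measurable_id).pow_const s).aestronglyMeasurable) ?_
  filter_upwards [ae_restrict_mem measurableSet_Ioi] with x hx
  have hx0 : 0 < x := hb.trans hx
  have h1x : (0 : ℝ) < 1 + x := by linarith
  rw [Real.norm_eq_abs, abs_of_nonneg (Real.rpow_nonneg h1x.le _)]
  exact Real.rpow_le_rpow_of_nonpos hx0 (by linarith) (by linarith)

lemma integrableOn_f {μ a t : ℝ} (ha : 0 < a) (ht : max (μ - 1) 0 + 1 < t) :
    IntegrableOn (fun x => x ^ (μ - 1) * (1 + x) ^ (-t)) (Set.Ioi a) := by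
  have hKpos : (0 : ℝ) < max (a ^ (μ - 1)) 1 := lt_of_lt_of_le one_pos (le_max_right _ _)
  have hg : IntegrableOn (fun x => max (a ^ (μ - 1)) 1 * (1 + x) ^ (max (μ - 1) 0 - t))
      (Set.Ioi a) :=
    (integrableOn_one_add_rpow ha (by linarith)).const_mul _
  refine Integrable.mono' hg
    (((measurable_id.pow_const (μ - 1)).mul
      ((measurable_const.add measurable_id).pow_const (-t))).aestronglyMeasurable) ?_
  filter_upwards [ae_restrict_mem measurableSet_Ioi] with x hx
  have hx0 : 0 < x := ha.trans hx
  have h1x : (0 : ℝ) < 1 + x := by linarith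
  rw [Real.norm_eq_abs, abs_of_nonneg (by positivity)]
  exact ptwise_tail ha hx

lemma core (μ a : ℝ) (ha : 0 < a) (S : Set ℝ) (hS : MeasurableSet S) (δ₀ : ℝ)
    (hδ₀ : 0 < δ₀) (hsub₀ : Set.Ioc a (a + δ₀) ⊆ S) (hSsub : S ⊆ Set.Ioi a) :
    Tendsto (fun t : ℝ => (a + 1) ^ (t - 1) * t *
        ∫ x in S, x ^ (μ - 1) * (1 + x) ^ (-t)) atTop (nhds (a ^ (μ - 1))) := by
  have hca : a + 1 = 1 + a := add_comm a 1
  simp only [hca]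
  have hc : (0 : ℝ) < 1 + a := by linarith
  set E := max (μ - 1) 0 with hE
  set K := max (a ^ (μ - 1)) 1 with hK
  set L := a ^ (μ - 1) with hL
  have hL0 : 0 < L := Real.rpow_pos_of_pos ha _
  have hcont : ContinuousAt (fun x : ℝ => x ^ (μ - 1)) a :=
    Real.continuousAt_rpow_const a _ (Or.inl ha.ne')
  set f : ℝ → ℝ → ℝ := fun t x => x ^ (μ - 1) * (1 + x) ^ (-t) with hf
  have hnonneg : ∀ t : ℝ, ∀ x ∈ Set.Ioi a, 0 ≤ f t x := by
    intro t x hx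
    have hx0 : 0 < x := ha.trans hx
    have h1x : (0 : ℝ) < 1 + x := by linarith
    positivity
  have haeS : ∀ t : ℝ, 0 ≤ᵐ[volume.restrict S] f t := by
    intro t
    filter_upwards [ae_restrict_mem hS] with x hx
    exact hnonneg t x (hSsub hx)
  rw [tendsto_order]
  constructor
  · -- lower bound
    intro l hl
    set m := (l + L) / 2 with hm
    have hm1 : l < m := by rw [hm]; linarith
    have hm2 : m < L := by rw [hm]; linarith
    have hev : ∀ᶠ x in nhds a, m < x ^ (μ - 1) := hcont.eventually (eventually_gt_nhds hm2)
    obtain ⟨ε, hε, hball⟩ := Metric.eventually_nhds_iff.1 hev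
    set δ := min δ₀ (ε / 2) with hδdef
    have hδ : 0 < δ := lt_min hδ₀ (by linarith)
    have hδε : δ ≤ ε / 2 := min_le_right _ _
    have hbound : ∀ x ∈ Set.Ioc a (a + δ), m < x ^ (μ - 1) := by
      intro x hx
      apply hball
      rw [Real.dist_eq, abs_of_pos (by linarith [hx.1])]
      linarith [hx.2]
    have hsub : Set.Ioc a (a + δ) ⊆ S := fun x hx =>
      hsub₀ ⟨hx.1, hx.2.trans (by simp [hδdef, min_le_left])⟩
    have hcd : (1 : ℝ) + a < 1 + (a + δ) := by linarith
    have hΦ := tendsto_Phi hc hcd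
    have hmΦ := hΦ.const_mul m
    rw [mul_one] at hmΦ
    have hev2 := hmΦ.eventually (eventually_gt_nhds hm1)
    filter_upwards [hev2, eventually_gt_atTop (max (E + 1) 1)] with t hltm htB
    have ht1 : 1 < t := lt_of_le_of_lt (le_max_right _ _) htB
    have htE : E + 1 < t := lt_of_le_of_lt (le_max_left _ _) htB
    have hint : IntegrableOn (f t) (Set.Ioi a) := integrableOn_f ha htE
    have hintS : IntegrableOn (f t) S := hint.mono_set hSsub
    have step1 : ∫ x in Set.Ioc a (a + δ), f t x ≤ ∫ x in S, f t x :=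
      setIntegral_mono_set hintS (haeS t) (HasSubset.Subset.eventuallyLE hsub)
    set H := ((1 + a) ^ (1 - t) - (1 + (a + δ)) ^ (1 - t)) / (t - 1) with hHdef
    have hHval : ∫ x in Set.Ioc a (a + δ), (1 + x) ^ (-t) = H :=
      integral_Ioc_one_add_rpow ha (by linarith) ht1
    have step2 : m * H ≤ ∫ x in Set.Ioc a (a + δ), f t x := by
      have hintf : IntegrableOn (f t) (Set.Ioc a (a + δ)) :=
        hint.mono_set Set.Ioc_subset_Ioi_self
      have hintg : IntegrableOn (fun x => m * (1 + x) ^ (-t)) (Set.Ioc a (a + δ)) :=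
        ((integrableOn_one_add_rpow ha (by linarith : -t < -1)).mono_set
          Set.Ioc_subset_Ioi_self).const_mul m
      have hmono := setIntegral_mono_on hintg hintf measurableSet_Ioc (fun x hx => by
        have hx0 : 0 < x := ha.trans hx.1
        have h1x : (0 : ℝ) < 1 + x := by linarith
        exact mul_le_mul_of_nonneg_right (hbound x hx).le (Real.rpow_nonneg h1x.le _))
      calc m * H = ∫ x in Set.Ioc a (a + δ), m * (1 + x) ^ (-t) := by
            rw [integral_const_mul, hHval]
        _ ≤ ∫ x in Set.Ioc a (a + δ), f t x := hmono
    have hpos : (0 : ℝ) ≤ (1 + a) ^ (t - 1) * t := by positivity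
    calc l < m * ((1 + a) ^ (t - 1) * t * H) := hltm
      _ = (1 + a) ^ (t - 1) * t * (m * H) := by ring
      _ ≤ (1 + a) ^ (t - 1) * t * ∫ x in S, f t x :=
          mul_le_mul_of_nonneg_left (step2.trans step1) hpos
  · -- upper bound
    intro u hu
    set M := (L + u) / 2 with hM
    have hM1 : L < M := by rw [hM]; linarith
    have hM2 : M < u := by rw [hM]; linarith
    have hev : ∀ᶠ x in nhds a, x ^ (μ - 1) < M := hcont.eventually (eventually_lt_nhds hM1)
    obtain ⟨ε, hε, hball⟩ := Metric.eventually_nhds_iff.1 hev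
    set δ := min δ₀ (ε / 2) with hδdef
    have hδ : 0 < δ := lt_min hδ₀ (by linarith)
    have hδε : δ ≤ ε / 2 := min_le_right _ _
    have hbound : ∀ x ∈ Set.Ioc a (a + δ), x ^ (μ - 1) < M := by
      intro x hx
      apply hball
      rw [Real.dist_eq, abs_of_pos (by linarith [hx.1])]
      linarith [hx.2]
    have hcd : (1 : ℝ) + a < 1 + (a + δ) := by linarith
    have hΦ := tendsto_Phi hc hcd
    have hΨ := tendsto_Psi hc hcd E K
    have hlim := (hΦ.const_mul M).add hΨ
    rw [mul_one, add_zero] at hlim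
    have hev2 := hlim.eventually (eventually_lt_nhds hM2)
    filter_upwards [hev2, eventually_gt_atTop (max (E + 1) 1)] with t hltM htB
    have ht1 : 1 < t := lt_of_le_of_lt (le_max_right _ _) htB
    have htE : E + 1 < t := lt_of_le_of_lt (le_max_left _ _) htB
    have hint : IntegrableOn (f t) (Set.Ioi a) := integrableOn_f ha htE
    have hintS : IntegrableOn (f t) S := hint.mono_set hSsub
    set H := ((1 + a) ^ (1 - t) - (1 + (a + δ)) ^ (1 - t)) / (t - 1) with hHdef
    have hHval : ∫ x in Set.Ioc a (a + δ), (1 + x) ^ (-t) = H :=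
      integral_Ioc_one_add_rpow ha (by linarith) ht1
    set T := (1 + (a + δ)) ^ (E + 1 - t) / (t - (E + 1)) with hTdef
    have hTval : ∫ x in Set.Ioi (a + δ), (1 + x) ^ (E - t) = T := by
      rw [integral_Ioi_one_add_rpow (by linarith : (0:ℝ) < a + δ) (by linarith : E - t < -1)]
      rw [hTdef, show E - t + 1 = E + 1 - t by ring, show -(E + 1 - t) = t - (E + 1) by ring]
    have step0 : ∫ x in S, f t x ≤ ∫ x in Set.Ioi a, f t x :=
      setIntegral_mono_set hint
        (by filter_upwards [ae_restrict_mem measurableSet_Ioi] with x hx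
            exact hnonneg t x hx)
        (HasSubset.Subset.eventuallyLE hSsub)
    have hintf1 : IntegrableOn (f t) (Set.Ioc a (a + δ)) :=
      hint.mono_set Set.Ioc_subset_Ioi_self
    have hintf2 : IntegrableOn (f t) (Set.Ioi (a + δ)) :=
      hint.mono_set (Set.Ioi_subset_Ioi (by linarith))
    have hsplit : ∫ x in Set.Ioi a, f t x =
        (∫ x in Set.Ioc a (a + δ), f t x) + ∫ x in Set.Ioi (a + δ), f t x := by
      rw [← setIntegral_union (Set.Ioc_disjoint_Ioi le_rfl) measurableSet_Ioi hintf1 hintf2,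
        Set.Ioc_union_Ioi_eq_Ioi (by linarith : a ≤ a + δ)]
    have step1 : ∫ x in Set.Ioc a (a + δ), f t x ≤ M * H := by
      have hintg : IntegrableOn (fun x => M * (1 + x) ^ (-t)) (Set.Ioc a (a + δ)) :=
        ((integrableOn_one_add_rpow ha (by linarith : -t < -1)).mono_set
          Set.Ioc_subset_Ioi_self).const_mul M
      have hmono := setIntegral_mono_on hintf1 hintg measurableSet_Ioc (fun x hx => by
        have hx0 : 0 < x := ha.trans hx.1
        have h1x : (0 : ℝ) < 1 + x := by linarith
        exact mul_le_mul_of_nonneg_right (hbound x hx).le (Real.rpow_nonneg h1x.le _))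
      calc ∫ x in Set.Ioc a (a + δ), f t x
          ≤ ∫ x in Set.Ioc a (a + δ), M * (1 + x) ^ (-t) := hmono
        _ = M * H := by rw [integral_const_mul, hHval]
    have step2 : ∫ x in Set.Ioi (a + δ), f t x ≤ K * T := by
      have hintg : IntegrableOn (fun x => K * (1 + x) ^ (E - t)) (Set.Ioi (a + δ)) :=
        (integrableOn_one_add_rpow (by linarith : (0:ℝ) < a + δ)
          (by linarith : E - t < -1)).const_mul K
      have hmono := setIntegral_mono_on hintf2 hintg measurableSet_Ioi (fun x hx => by
        exact ptwise_tail ha (lt_of_le_of_lt (by linarith) hx))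
      calc ∫ x in Set.Ioi (a + δ), f t x
          ≤ ∫ x in Set.Ioi (a + δ), K * (1 + x) ^ (E - t) := hmono
        _ = K * T := by rw [integral_const_mul, hTval]
    have hpos : (0 : ℝ) ≤ (1 + a) ^ (t - 1) * t := by positivity
    calc (1 + a) ^ (t - 1) * t * ∫ x in S, f t x
        ≤ (1 + a) ^ (t - 1) * t * (M * H + K * T) := by
          apply mul_le_mul_of_nonneg_left _ hpos
          calc ∫ x in S, f t x ≤ ∫ x in Set.Ioi a, f t x := step0
            _ = (∫ x in Set.Ioc a (a + δ), f t x) + ∫ x in Set.Ioi (a + δ), f t x := hsplit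
            _ ≤ M * H + K * T := add_le_add step1 step2
      _ = M * ((1 + a) ^ (t - 1) * t * H) +
          (1 + a) ^ (t - 1) * t * (K * ((1 + (a + δ)) ^ (E + 1 - t) / (t - (E + 1)))) := by
          rw [hTdef]; ring
      _ < u := hltM

end Stmt1Aux

/-- Lemma 2.1, case `x₁ > 0`: for any `μ ∈ ℝ` and `x₁ < x₂ ≤ ∞`,
`(x₁+1)^{t-1} t ∫_{x₁}^{x₂} x^{μ-1}(1+x)^{-t} dx → x₁^{μ-1}` as `t → ∞`. -/
theorem stmt_1 (μ x₁ : ℝ) (hx₁ : 0 < x₁) (x₂ : EReal) (hx₂ : (x₁ : EReal) < x₂) :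
    Tendsto (fun t : ℝ => (x₁ + 1) ^ (t - 1) * t *
        ∫ x in {x : ℝ | x₁ < x ∧ (x : EReal) < x₂}, x ^ (μ - 1) * (1 + x) ^ (-t))
      atTop (nhds (x₁ ^ (μ - 1))) := by
  induction x₂ using EReal.rec with
  | bot => exact absurd hx₂ (by simp)
  | coe b =>
    have hb : x₁ < b := by exact_mod_cast hx₂
    have hset : {x : ℝ | x₁ < x ∧ (x : EReal) < (b : EReal)} = Set.Ioo x₁ b := by
      ext x; simp [EReal.coe_lt_coe_iff]
    rw [hset]
    refine Stmt1Aux.core μ x₁ hx₁ (Set.Ioo x₁ b) measurableSet_Ioo ((b - x₁) / 2)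
      (by linarith) ?_ Set.Ioo_subset_Ioi_self
    intro x hx
    exact ⟨hx.1, by linarith [hx.2]⟩
  | top =>
    have hset : {x : ℝ | x₁ < x ∧ (x : EReal) < ⊤} = Set.Ioi x₁ := by
      ext x; simp [EReal.coe_lt_top]
    rw [hset]
    exact Stmt1Aux.core μ x₁ hx₁ (Set.Ioi x₁) measurableSet_Ioi 1 one_pos
      (fun x hx => hx.1) subset_rfl
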